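/- If M is a numerical monoid (additive submonoid of the non-negative integers) with gcd d, and x ∈ M is nonzero, then the Apéry set Ap(M;x) = {m ∈ M : m − x ∉ M} has exactly x/d elements. -/
import Mathlib


/-- If `M` is a numerical monoid (additive submonoid of `ℕ`) with gcd `d`,
and `x ∈ M` is nonzero, then the Apéry set `Ap(M;x) = {m ∈ M : m − x ∉ M}`
(where `m - x` is taken in `ℤ`, encoded by the guard `x ≤ m`) has exactly `x / d` elements. -/
theorem apery_ncard (M : AddSubmonoid ℕ) (d : ℕ)
    (hd_dvd : ∀ m ∈ M, d ∣ m)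
    (hd_gcd : ∀ c : ℕ, (∀ m ∈ M, c ∣ m) → c ∣ d)
    (x : ℕ) (hx : x ∈ M) (hx0 : x ≠ 0) :
    Set.ncard {m : ℕ | m ∈ M ∧ ¬(x ≤ m ∧ m - x ∈ M)} = x / d := by
  classical
  have hdx : d ∣ x := hd_dvd x hx
  have hd0 : d ≠ 0 := fun h => hx0 (by simpa [h] using hdx)
  have hxpos : 0 < x := Nat.pos_of_ne_zero hx0
  -- The subgroup of ℤ generated by M
  set S : Set ℤ := (Nat.cast '' (M : Set ℕ)) with hS
  set H : AddSubgroup ℤ := AddSubgroup.closure S with hH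
  obtain ⟨g, hg⟩ := Int.subgroup_cyclic H
  have hgH : g ∈ H := by
    rw [hg]; exact AddSubgroup.mem_closure_singleton.mpr ⟨1, one_smul _ _⟩
  -- d divides every element of H
  have hHd : ∀ z ∈ H, (d : ℤ) ∣ z := by
    intro z hz
    have : H ≤ AddSubgroup.zmultiples (d : ℤ) := by
      rw [hH]
      apply AddSubgroup.closure_le _ |>.mpr
      rintro _ ⟨m, hm, rfl⟩
      exact Int.mem_zmultiples_iff.mpr (Int.natCast_dvd_natCast.mpr (hd_dvd m hm))
    exact Int.mem_zmultiples_iff.mp (this hz)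
  -- g.natAbs divides every element of M
  have hgM : ∀ m ∈ M, g.natAbs ∣ m := by
    intro m hm
    have : (m : ℤ) ∈ H := AddSubgroup.subset_closure ⟨m, hm, rfl⟩
    rw [hg] at this
    obtain ⟨n, hn⟩ := AddSubgroup.mem_closure_singleton.mp this
    have : g ∣ (m : ℤ) := dvd_of_mul_left_eq n (by rw [← hn, zsmul_eq_mul]; norm_cast)
    exact Int.natCast_dvd_natCast.mp (Int.natAbs_dvd.mpr this)
  have hgd : g.natAbs = d := by
    apply Nat.dvd_antisymm (hd_gcd _ hgM)
    have : (d : ℤ) ∣ g := hHd g hgH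
    exact Int.natCast_dvd_natCast.mp (Int.dvd_natAbs.mpr this)
  have hdH : (d : ℤ) ∈ H := by
    rcases Int.natAbs_eq g with h | h
    · rw [hgd] at h; rw [← h]; exact hgH
    · rw [hgd] at h
      have : (d : ℤ) = -g := by omega
      rw [this]; exact H.neg_mem hgH
  -- The subgroup of differences of elements of M
  let K : AddSubgroup ℤ :=
    { carrier := {z | ∃ a ∈ M, ∃ b ∈ M, (a : ℤ) - b = z}
      zero_mem' := ⟨0, M.zero_mem, 0, M.zero_mem, by simp⟩
      add_mem' := by
        rintro _ _ ⟨a, ha, b, hb, rfl⟩ ⟨c, hc, e, he, rfl⟩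
        exact ⟨a + c, M.add_mem ha hc, b + e, M.add_mem hb he, by push_cast; ring⟩
      neg_mem' := by
        rintro _ ⟨a, ha, b, hb, rfl⟩
        exact ⟨b, hb, a, ha, by ring⟩ }
  have hHK : H ≤ K := by
    rw [hH]
    apply AddSubgroup.closure_le _ |>.mpr
    rintro _ ⟨m, hm, rfl⟩
    exact ⟨m, hm, 0, M.zero_mem, by simp⟩
  -- existence of an element of M in each residue class d*r mod x
  have hexists : ∀ r : ℕ, ∃ m ∈ M, m % x = (d * r) % x := by
    intro r
    have : ((d * r : ℕ) : ℤ) ∈ H := by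
      push_cast
      simpa [zsmul_eq_mul, mul_comm] using H.zsmul_mem hdH (r : ℤ)
    obtain ⟨a, ha, b, hb, hab⟩ := hHK this
    refine ⟨a + (x - 1) * b, M.add_mem ha ?_, ?_⟩
    · simpa [smul_eq_mul] using M.nsmul_mem hb (x - 1)
    · have hcast : ((a + (x - 1) * b : ℕ) : ℤ) = ((a : ℤ) - b) + (x : ℤ) * b := by
        push_cast [Nat.cast_sub (Nat.one_le_iff_ne_zero.mpr hx0)]
        ring
      have : ((a + (x - 1) * b : ℕ) : ℤ) % (x : ℤ) = ((d * r : ℕ) : ℤ) % (x : ℤ) := by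
        rw [hcast, Int.add_mul_emod_self_left, hab]
      have := this
      rw [← Int.natCast_mod, ← Int.natCast_mod] at this
      exact_mod_cast this
    -- key injectivity lemma
  have hmod_dvd : ∀ m ∈ M, d ∣ m % x := fun m hm => (Nat.dvd_mod_iff hdx).mpr (hd_dvd m hm)
  set Ap : Set ℕ := {m : ℕ | m ∈ M ∧ ¬(x ≤ m ∧ m - x ∈ M)} with hAp
  have key : ∀ m1 ∈ Ap, ∀ m2 ∈ Ap, m1 % x = m2 % x → m1 ≤ m2 → m1 = m2 := by
    intro m1 h1 m2 h2 hmod hle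
    by_contra hne
    have hlt : m1 < m2 := lt_of_le_of_ne hle hne
    have hdvd : x ∣ m2 - m1 := (Nat.modEq_iff_dvd' hle).mp hmod
    obtain ⟨k, hk⟩ := hdvd
    rcases k with _ | k'
    · omega
    · have hxk : x * (k' + 1) = x * k' + x := by ring
      rw [hxk] at hk
      have hm2x : m2 - x = m1 + x * k' := by omega
      have hmem : m2 - x ∈ M := by
        rw [hm2x]
        exact M.add_mem h1.1 (by simpa [smul_eq_mul, mul_comm] using M.nsmul_mem hx k')
      exact h2.2 ⟨by omega, hmem⟩
  -- the map to residue indices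
  set f : ℕ → ℕ := fun m => m % x / d with hf
  have hinj : Set.InjOn f Ap := by
    intro m1 h1 m2 h2 heq
    have e1 := Nat.div_mul_cancel (hmod_dvd m1 h1.1)
    have e2 := Nat.div_mul_cancel (hmod_dvd m2 h2.1)
    have hmod : m1 % x = m2 % x := by
      rw [← e1, ← e2]
      simp only [hf] at heq
      rw [heq]
    rcases le_total m1 m2 with h | h
    · exact key m1 h1 m2 h2 hmod h
    · exact (key m2 h2 m1 h1 hmod.symm h).symm
  have himg : f '' Ap = ↑(Finset.range (x / d)) := by
    obtain ⟨s, hs⟩ := hdx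
    have hsd : x / d = s := by rw [hs, Nat.mul_div_cancel_left _ (Nat.pos_of_ne_zero hd0)]
    ext r
    simp only [Set.mem_image, Finset.coe_range, Set.mem_Iio]
    constructor
    · rintro ⟨m, hm, rfl⟩
      obtain ⟨q, hq⟩ := hmod_dvd m hm.1
      have hmx : m % x < x := Nat.mod_lt _ hxpos
      rw [hq, hs] at hmx
      have hqs : q < s := lt_of_mul_lt_mul_left hmx (Nat.zero_le d)
      simp only [hf]
      rw [hq, Nat.mul_div_cancel_left _ (Nat.pos_of_ne_zero hd0), hsd]
      exact hqs
    · intro hr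
      have hdrx : d * r < x := by
        rw [hs]
        exact (Nat.mul_lt_mul_left (Nat.pos_of_ne_zero hd0)).mpr (hsd ▸ hr)
      have hex : ∃ m, m ∈ M ∧ m % x = d * r := by
        obtain ⟨m, hm, hmr⟩ := hexists r
        exact ⟨m, hm, by rw [hmr, Nat.mod_eq_of_lt hdrx]⟩
      set m0 := Nat.find hex with hm0def
      have hm0 := Nat.find_spec hex
      refine ⟨m0, ⟨hm0.1, ?_⟩, ?_⟩
      · rintro ⟨hxle, hmem⟩
        have hlt : m0 - x < m0 := by omega
        apply Nat.find_min hex hlt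
        refine ⟨hmem, ?_⟩
        have : (m0 - x) % x = m0 % x := by
          conv_rhs => rw [← Nat.sub_add_cancel hxle]
          rw [Nat.add_mod_right]
        rw [this, hm0.2]
      · simp only [hf]
        rw [hm0.2, Nat.mul_div_cancel_left _ (Nat.pos_of_ne_zero hd0)]
  calc Ap.ncard = (f '' Ap).ncard := (Set.ncard_image_of_injOn hinj).symm
    _ = x / d := by rw [himg, Set.ncard_coe_finset, Finset.card_range]
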